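/- arXiv:2309.00098 — 6 statements merged into one kernel-verified Lean document; each statement's English description precedes it below -/
import Mathlib

section
/- Let H be a Sperner hypergraph. Then the dual hypergraph of the dual hypergraph of H equals H, i.e., (H^d)^d = H. -/
open Finset
open scoped Classical

variable {V : Type*} [Fintype V] [DecidableEq V]

/-- A hypergraph on vertex set `V` is given by its finite set of hyperedges `E`;
the condition that every vertex belongs to at least one hyperedge. -/
def Covers (E : Finset (Finset V)) : Prop := ∀ v : V, ∃ e ∈ E, v ∈ e

/-- A hypergraph is Sperner if no hyperedge is contained in another hyperedge. -/
def SpernerHG (E : Finset (Finset V)) : Prop := ∀ e ∈ E, ∀ f ∈ E, e ⊆ f → e = f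

/-- A transversal of a hypergraph: a set of vertices intersecting all hyperedges. -/
def IsTransversal (E : Finset (Finset V)) (T : Finset V) : Prop := ∀ e ∈ E, (e ∩ T).Nonempty

/-- A minimal transversal: a transversal not properly containing another transversal. -/
def IsMinTransversal (E : Finset (Finset V)) (T : Finset V) : Prop :=
  IsTransversal E T ∧ ∀ T' ⊆ T, IsTransversal E T' → T' = T

/-- The dual hypergraph: its hyperedges are exactly the minimal transversals. -/
noncomputable def dualHG (E : Finset (Finset V)) : Finset (Finset V) :=
  Finset.univ.filter fun T => IsMinTransversal E T

/-- The co-occurrence graph of a hypergraph: two distinct vertices are adjacent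
iff some hyperedge contains both. -/
def coocGraph (E : Finset (Finset V)) : SimpleGraph V where
  Adj u v := u ≠ v ∧ ∃ e ∈ E, u ∈ e ∧ v ∈ e
  symm := by
    constructor
    rintro u v ⟨huv, e, he, hu, hv⟩
    exact ⟨Ne.symm huv, e, he, hv, hu⟩
  loopless := by
    constructor
    rintro v ⟨hv, -⟩
    exact hv rfl

/-- A maximal clique of a graph: a clique not properly contained in any other clique. -/
def IsMaxClique (G : SimpleGraph V) (C : Finset V) : Prop :=
  G.IsClique (C : Set V) ∧ ∀ D : Finset V, G.IsClique (D : Set V) → C ⊆ D → D = C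

/-- A hypergraph is conformal if every maximal clique of its co-occurrence graph
is a hyperedge. -/
def ConformalHG (E : Finset (Finset V)) : Prop :=
  ∀ C : Finset V, IsMaxClique (coocGraph E) C → C ∈ E

/-- A hypergraph is dually conformal if its dual hypergraph is conformal. -/
def DuallyConformalHG (E : Finset (Finset V)) : Prop :=
  ConformalHG (dualHG E)

/-- A clique transversal of a graph: a set of vertices meeting all maximal cliques. -/
def IsCliqueTransversal (G : SimpleGraph V) (X : Finset V) : Prop :=
  ∀ C : Finset V, IsMaxClique G C → (C ∩ X).Nonempty

/-- A minimal clique transversal: a clique transversal not properly containing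
another clique transversal. -/
def IsMinCliqueTransversal (G : SimpleGraph V) (X : Finset V) : Prop :=
  IsCliqueTransversal G X ∧ ∀ Y ⊆ X, IsCliqueTransversal G Y → Y = X

/-- The upper clique transversal number: the maximum size of a minimal clique
transversal. -/
noncomputable def uct (G : SimpleGraph V) : ℕ :=
  (Finset.univ.filter fun X : Finset V => IsMinCliqueTransversal G X).sup Finset.card

lemma exists_min_trans (E : Finset (Finset V)) :
    ∀ T : Finset V, IsTransversal E T → ∃ M ⊆ T, IsMinTransversal E M := by
  intro T
  induction T using Finset.strongInductionOn with
  | _ T ih =>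
    intro hT
    by_cases h : ∀ T' ⊆ T, IsTransversal E T' → T' = T
    · exact ⟨T, Finset.Subset.rfl, hT, h⟩
    · push_neg at h
      obtain ⟨T', hsub, htr, hne⟩ := h
      obtain ⟨M, hM, hmin⟩ := ih T' (lt_of_le_of_ne hsub hne) htr
      exact ⟨M, hM.trans hsub, hmin⟩

lemma compl_trans_of_no_sub (E : Finset (Finset V)) (T : Finset V)
    (h : ∀ f ∈ E, ¬ f ⊆ T) : IsTransversal E Tᶜ := by
  intro f hf
  obtain ⟨a, ha, haT⟩ := Finset.not_subset.mp (h f hf)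
  exact ⟨a, Finset.mem_inter.mpr ⟨ha, Finset.mem_compl.mpr haT⟩⟩

lemma edge_trans_dual (E : Finset (Finset V)) (e : Finset V) (he : e ∈ E) :
    IsTransversal (dualHG E) e := by
  intro M hM
  rw [dualHG, Finset.mem_filter] at hM
  obtain ⟨x, hx⟩ := hM.2.1 e he
  rw [Finset.mem_inter] at hx
  exact ⟨x, Finset.mem_inter.mpr ⟨hx.2, hx.1⟩⟩

lemma edge_min_trans_dual (E : Finset (Finset V)) (hsp : SpernerHG E)
    (e : Finset V) (he : e ∈ E) : IsMinTransversal (dualHG E) e := by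
  refine ⟨edge_trans_dual E e he, fun T hTe hT => ?_⟩
  by_contra hne
  have hnosub : ∀ f ∈ E, ¬ f ⊆ T := by
    intro f hf hfT
    have hfe : f = e := hsp f hf e he (hfT.trans hTe)
    exact hne (Finset.Subset.antisymm hTe (hfe ▸ hfT))
  obtain ⟨M, hMsub, hMmin⟩ :=
    exists_min_trans E Tᶜ (compl_trans_of_no_sub E T hnosub)
  have hMdual : M ∈ dualHG E := by
    rw [dualHG, Finset.mem_filter]; exact ⟨Finset.mem_univ _, hMmin⟩
  obtain ⟨x, hx⟩ := hT M hMdual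
  rw [Finset.mem_inter] at hx
  exact Finset.mem_compl.mp (hMsub hx.1) hx.2

/-- For a Sperner hypergraph `H`, `(H^d)^d = H`. -/
theorem dualHG_dualHG [Nonempty V] (E : Finset (Finset V))
    (hcov : Covers E) (hsp : SpernerHG E) :
    dualHG (dualHG E) = E := by
  ext T
  rw [dualHG, Finset.mem_filter]
  constructor
  · rintro ⟨-, hTtr, hTmin⟩
    -- T contains some edge e
    have hsub : ∃ e ∈ E, e ⊆ T := by
      by_contra h
      push_neg at h
      obtain ⟨M, hMsub, hMmin⟩ :=
        exists_min_trans E Tᶜ (compl_trans_of_no_sub E T h)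
      have hMdual : M ∈ dualHG E := by
        rw [dualHG, Finset.mem_filter]; exact ⟨Finset.mem_univ _, hMmin⟩
      obtain ⟨x, hx⟩ := hTtr M hMdual
      rw [Finset.mem_inter] at hx
      exact Finset.mem_compl.mp (hMsub hx.1) hx.2
    obtain ⟨e, he, heT⟩ := hsub
    have : e = T := hTmin e heT (edge_trans_dual E e he)
    exact this ▸ he
  · intro he
    exact ⟨Finset.mem_univ _, edge_min_trans_dual E hsp T he⟩
end

section
/- Let H = (V, E) be a hypergraph and let S ⊆ V. For each v ∈ S, let E_v(S) denote the set of hyperedges e ∈ E such that e ∩ S = {v}. Then S is contained in some minimal transversal of H if and only if there exists a choice of hyperedges e_v ∈ E_v(S), one for each v ∈ S, such that the set (⋃_{v∈S} e_v) \ S does not contain any hyperedge of H. -/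
open Finset
open scoped Classical

variable {V : Type*} [Fintype V] [DecidableEq V]

/-- `S` is contained in some minimal transversal of `H` iff there is a
choice of hyperedges `e_v ∈ E_v(S)` (i.e. `e_v ∩ S = {v}`), one for each `v ∈ S`,
such that `(⋃_{v ∈ S} e_v) \ S` contains no hyperedge of `H`. -/
theorem subtransversal_iff [Nonempty V] (E : Finset (Finset V)) (hcov : Covers E)
    (S : Finset V) :
    (∃ T : Finset V, IsMinTransversal E T ∧ S ⊆ T) ↔
      ∃ f : V → Finset V, (∀ v ∈ S, f v ∈ E ∧ f v ∩ S = {v}) ∧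
        ∀ e ∈ E, ¬ e ⊆ (S.biUnion f) \ S := by
  constructor
  · rintro ⟨T, ⟨hT, hTmin⟩, hST⟩
    have key : ∀ v ∈ S, ∃ e, e ∈ E ∧ e ∩ T = {v} := by
      intro v hv
      have hvT : v ∈ T := hST hv
      have hne : T.erase v ≠ T := fun h => (h ▸ Finset.notMem_erase v T) hvT
      have hnt : ¬ IsTransversal E (T.erase v) := fun h =>
        hne (hTmin _ (Finset.erase_subset _ _) h)
      rw [IsTransversal] at hnt
      push_neg at hnt
      obtain ⟨e, he, hem⟩ := hnt
      have huniq : ∀ x, x ∈ e → x ∈ T → x = v := by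
        intro x hxe hxT
        by_contra hxv
        exact (Finset.eq_empty_iff_forall_notMem.mp hem) x (Finset.mem_inter.mpr ⟨hxe, Finset.mem_erase.mpr ⟨hxv, hxT⟩⟩)
      obtain ⟨y, hy⟩ := hT e he
      rw [Finset.mem_inter] at hy
      have hyv : y = v := huniq y hy.1 hy.2
      refine ⟨e, he, ?_⟩
      ext x
      simp only [Finset.mem_inter, Finset.mem_singleton]
      constructor
      · rintro ⟨h1, h2⟩; exact huniq x h1 h2
      · rintro rfl; exact ⟨hyv ▸ hy.1, hvT⟩
    choose! f hfE hfT using key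
    refine ⟨f, ?_, ?_⟩
    · intro v hv
      have hvfv : v ∈ f v := by
        have : v ∈ f v ∩ T := (hfT v hv) ▸ Finset.mem_singleton_self v
        exact (Finset.mem_inter.mp this).1
      refine ⟨hfE v hv, ?_⟩
      ext x
      simp only [Finset.mem_inter, Finset.mem_singleton]
      constructor
      · rintro ⟨h1, h2⟩
        have : x ∈ f v ∩ T := Finset.mem_inter.mpr ⟨h1, hST h2⟩
        rw [hfT v hv] at this
        exact Finset.mem_singleton.mp this
      · rintro rfl; exact ⟨hvfv, hv⟩
    · intro e he hsub
      obtain ⟨u, hu⟩ := hT e he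
      rw [Finset.mem_inter] at hu
      have := hsub hu.1
      rw [Finset.mem_sdiff] at this
      obtain ⟨hub, huS⟩ := this
      obtain ⟨v, hvS, hufv⟩ := Finset.mem_biUnion.mp hub
      have : u ∈ f v ∩ T := Finset.mem_inter.mpr ⟨hufv, hu.2⟩
      rw [hfT v hvS] at this
      exact huS (Finset.mem_singleton.mp this ▸ hvS)
  · rintro ⟨f, hf, hne⟩
    set A := (S.biUnion f) \ S with hA
    have hSA : ∀ v ∈ S, v ∉ A := fun v hv h => (Finset.mem_sdiff.mp h).2 hv
    have hT0 : IsTransversal E (Finset.univ \ A) := by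
      intro e he
      by_contra h
      rw [Finset.not_nonempty_iff_eq_empty] at h
      apply hne e he
      intro x hx
      by_contra hxA
      have hm : x ∈ e ∩ (Finset.univ \ A) :=
        Finset.mem_inter.mpr ⟨hx, Finset.mem_sdiff.mpr ⟨Finset.mem_univ x, hxA⟩⟩
      simp [h] at hm
    have hS0 : S ⊆ Finset.univ \ A := fun v hv =>
      Finset.mem_sdiff.mpr ⟨Finset.mem_univ v, hSA v hv⟩
    obtain ⟨T, hTmem, hTmin⟩ := Finset.exists_min_image
      (Finset.univ.filter fun T => S ⊆ T ∧ T ⊆ Finset.univ \ A ∧ IsTransversal E T)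
      Finset.card ⟨Finset.univ \ A, by simp [hS0, hT0, Finset.Subset.refl]⟩
    simp only [Finset.mem_filter, Finset.mem_univ, true_and] at hTmem
    obtain ⟨hST, hTsub, hTtr⟩ := hTmem
    refine ⟨T, ⟨hTtr, ?_⟩, hST⟩
    intro T' hT'sub hT'tr
    by_cases hS' : S ⊆ T'
    · have hcard : T.card ≤ T'.card := by
        apply hTmin
        simp only [Finset.mem_filter, Finset.mem_univ, true_and]
        exact ⟨hS', hT'sub.trans hTsub, hT'tr⟩
      exact Finset.eq_of_subset_of_card_le hT'sub hcard
    · exfalso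
      obtain ⟨v, hvS, hvT'⟩ := Finset.not_subset.mp hS'
      obtain ⟨u, hu⟩ := hT'tr (f v) (hf v hvS).1
      rw [Finset.mem_inter] at hu
      have huA : u ∉ A := (Finset.mem_sdiff.mp (hTsub (hT'sub hu.2))).2
      by_cases huS : u ∈ S
      · have hm : u ∈ f v ∩ S := Finset.mem_inter.mpr ⟨hu.1, huS⟩
        rw [(hf v hvS).2] at hm
        exact hvT' (Finset.mem_singleton.mp hm ▸ hu.2)
      · exact huA (Finset.mem_sdiff.mpr ⟨Finset.mem_biUnion.mpr ⟨v, hvS, hu.1⟩, huS⟩)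
end

section
/- A hypergraph H = (V, E) is conformal if and only if for every three hyperedges e1, e2, e3 ∈ E there exists a hyperedge e ∈ E such that (e1 ∩ e2) ∪ (e1 ∩ e3) ∪ (e2 ∩ e3) ⊆ e. -/
open Finset
open scoped Classical

variable {V : Type*} [Fintype V] [DecidableEq V]

/-- Gilmore: `H` is conformal iff for every three hyperedges
`e1, e2, e3` there is a hyperedge `e` with `(e1 ∩ e2) ∪ (e1 ∩ e3) ∪ (e2 ∩ e3) ⊆ e`. -/
theorem conformal_iff_gilmore [Nonempty V] (E : Finset (Finset V)) (hcov : Covers E) :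
    ConformalHG E ↔ ∀ e1 ∈ E, ∀ e2 ∈ E, ∀ e3 ∈ E, ∃ e ∈ E,
      (e1 ∩ e2) ∪ (e1 ∩ e3) ∪ (e2 ∩ e3) ⊆ e := by
  constructor
  · -- forward: conformal → Gilmore property
    intro hconf e1 he1 e2 he2 e3 he3
    set S : Finset V := (e1 ∩ e2) ∪ (e1 ∩ e3) ∪ (e2 ∩ e3) with hS
    have hSclq : (coocGraph E).IsClique (S : Set V) := by
      intro u hu v hv huv
      have hu' : u ∈ S := hu
      have hv' : v ∈ S := hv
      simp only [hS, mem_union, mem_inter] at hu' hv'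
      refine ⟨huv, ?_⟩
      rcases hu' with (⟨h1,h2⟩|⟨h1,h2⟩)|⟨h1,h2⟩ <;>
        rcases hv' with (⟨g1,g2⟩|⟨g1,g2⟩)|⟨g1,g2⟩ <;>
        first
          | exact ⟨e1, he1, h1, g1⟩
          | exact ⟨e1, he1, h1, g2⟩
          | exact ⟨e1, he1, h2, g1⟩
          | exact ⟨e1, he1, h2, g2⟩
          | exact ⟨e2, he2, h1, g1⟩
          | exact ⟨e2, he2, h1, g2⟩
          | exact ⟨e2, he2, h2, g1⟩
          | exact ⟨e2, he2, h2, g2⟩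
          | exact ⟨e3, he3, h1, g1⟩
          | exact ⟨e3, he3, h1, g2⟩
          | exact ⟨e3, he3, h2, g1⟩
          | exact ⟨e3, he3, h2, g2⟩
    -- extend S to a maximal clique
    classical
    set A : Finset (Finset V) :=
      Finset.univ.filter fun D => (coocGraph E).IsClique (D : Set V) ∧ S ⊆ D with hA
    have hSA : S ∈ A := by simp [hA, hSclq]
    obtain ⟨C, hCA, hCmax⟩ := Finset.exists_max_image A Finset.card ⟨S, hSA⟩
    simp only [hA, Finset.mem_filter] at hCA
    have hCmaxclq : IsMaxClique (coocGraph E) C := by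
      refine ⟨hCA.2.1, fun D hD hCD => ?_⟩
      have hDA : D ∈ A := by
        simp [hA, hD, hCA.2.2.trans hCD]
      have := hCmax D hDA
      exact (Finset.eq_of_subset_of_card_le hCD this).symm
    exact ⟨C, hconf C hCmaxclq, hCA.2.2⟩
  · -- backward
    intro hG C hC
    have key : ∀ n : ℕ, ∀ S : Finset V, S ⊆ C → S.card ≤ n → ∃ e ∈ E, S ⊆ e := by
      intro n
      induction n with
      | zero =>
        intro S _ hcard
        have : S = ∅ := Finset.card_eq_zero.1 (Nat.le_zero.1 hcard)
        obtain ⟨e, he, _⟩ := hcov (Classical.arbitrary V)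
        exact ⟨e, he, this ▸ Finset.empty_subset e⟩
      | succ n ih =>
        intro S hSC hcard
        rcases lt_or_ge S.card 3 with hlt | hge
        · have h012 : S.card = 0 ∨ S.card = 1 ∨ S.card = 2 := by omega
          rcases h012 with h | h | h
          · obtain ⟨e, he, _⟩ := hcov (Classical.arbitrary V)
            exact ⟨e, he, (Finset.card_eq_zero.1 h) ▸ Finset.empty_subset e⟩
          · obtain ⟨v, rfl⟩ := Finset.card_eq_one.1 h
            obtain ⟨e, he, hv⟩ := hcov v
            exact ⟨e, he, Finset.singleton_subset_iff.2 hv⟩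
          · obtain ⟨u, v, huv, rfl⟩ := Finset.card_eq_two.1 h
            have hu : u ∈ (C : Set V) := hSC (by simp)
            have hv : v ∈ (C : Set V) := hSC (by simp)
            obtain ⟨-, e, he, hue, hve⟩ := hC.1 hu hv huv
            exact ⟨e, he, Finset.insert_subset hue (Finset.singleton_subset_iff.2 hve)⟩
        · -- card ≥ 3: get three distinct elements
          obtain ⟨u, hu⟩ := Finset.card_pos.1 (show 0 < S.card by omega)
          have h2 : 1 < (S.erase u).card := by
            rw [Finset.card_erase_of_mem hu]; omega
          obtain ⟨v, hv, w, hw, hvw⟩ := Finset.one_lt_card.1 h2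
          have hvu : v ≠ u := (Finset.mem_erase.1 hv).1
          have hwu : w ≠ u := (Finset.mem_erase.1 hw).1
          have hvS : v ∈ S := (Finset.mem_erase.1 hv).2
          have hwS : w ∈ S := (Finset.mem_erase.1 hw).2
          have hcard_erase : ∀ x ∈ S, (S.erase x).card ≤ n := by
            intro x hx; rw [Finset.card_erase_of_mem hx]; omega
          obtain ⟨f1, hf1, hs1⟩ := ih (S.erase u) ((Finset.erase_subset _ _).trans hSC)
            (hcard_erase u hu)
          obtain ⟨f2, hf2, hs2⟩ := ih (S.erase v) ((Finset.erase_subset _ _).trans hSC)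
            (hcard_erase v hvS)
          obtain ⟨f3, hf3, hs3⟩ := ih (S.erase w) ((Finset.erase_subset _ _).trans hSC)
            (hcard_erase w hwS)
          obtain ⟨e, he, hsub⟩ := hG f1 hf1 f2 hf2 f3 hf3
          refine ⟨e, he, fun x hx => hsub ?_⟩
          have m1 : x ≠ u → x ∈ f1 := fun h => hs1 (Finset.mem_erase.2 ⟨h, hx⟩)
          have m2 : x ≠ v → x ∈ f2 := fun h => hs2 (Finset.mem_erase.2 ⟨h, hx⟩)
          have m3 : x ≠ w → x ∈ f3 := fun h => hs3 (Finset.mem_erase.2 ⟨h, hx⟩)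
          simp only [Finset.mem_union, Finset.mem_inter]
          by_cases hxu : x = u
          · subst hxu
            exact Or.inr ⟨m2 (Ne.symm hvu), m3 (Ne.symm hwu)⟩
          · by_cases hxv : x = v
            · subst hxv
              exact Or.inl (Or.inr ⟨m1 hvu, m3 hvw⟩)
            · exact Or.inl (Or.inl ⟨m1 hxu, m2 hxv⟩)
    obtain ⟨e, he, hCe⟩ := key C.card C subset_rfl le_rfl
    have heclq : (coocGraph E).IsClique (e : Set V) := by
      intro a ha b hb hab
      exact ⟨hab, e, he, ha, hb⟩
    have := hC.2 e heclq hCe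
    rwa [this] at he
end

section
/- Let H be a hypergraph. Then the following are equivalent: (1) H is a dually conformal Sperner hypergraph; (2) there exists a finite simple graph G with vertex set V(H) such that the hyperedges of H are exactly the minimal clique transversals of G. -/
open Finset
open scoped Classical

variable {V : Type*} [Fintype V] [DecidableEq V]

/-- Every set satisfying `P` contains a subset that is minimal for `P`. -/
lemma exists_minimal_subset (P : Finset V → Prop) :
    ∀ T : Finset V, P T → ∃ S, S ⊆ T ∧ P S ∧ ∀ S' ⊆ S, P S' → S' = S := by
  intro T
  induction T using Finset.strongInduction with
  | _ T ih =>
    intro hT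
    by_cases h : ∀ S ⊆ T, P S → S = T
    · exact ⟨T, subset_rfl, hT, h⟩
    · push_neg at h
      obtain ⟨S, hST, hPS, hne⟩ := h
      obtain ⟨S', h1, h2, h3⟩ := ih S (ssubset_of_subset_of_ne hST hne) hPS
      exact ⟨S', h1.trans hST, h2, h3⟩

/-- Every clique extends to a maximal clique. -/
lemma exists_maxClique_superset (G : SimpleGraph V) (C : Finset V)
    (hC : G.IsClique (C : Set V)) : ∃ D, C ⊆ D ∧ IsMaxClique G D := by
  obtain ⟨D, hD, hmax⟩ := Finset.exists_max_image
    (Finset.univ.filter fun D => C ⊆ D ∧ G.IsClique (D : Set V)) Finset.card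
    ⟨C, by simp [hC]⟩
  simp only [Finset.mem_filter, Finset.mem_univ, true_and] at hD hmax
  refine ⟨D, hD.1, hD.2, fun D' hD' hsub => ?_⟩
  have := hmax D' ⟨hD.1.trans hsub, hD'⟩
  exact (Finset.eq_of_subset_of_card_le hsub this).symm

lemma dualHG_mem {E : Finset (Finset V)} {T : Finset V} :
    T ∈ dualHG E ↔ IsMinTransversal E T := by
  simp [dualHG]

lemma dualHG_sperner (E : Finset (Finset V)) : SpernerHG (dualHG E) := by
  intro e he f hf hef
  rw [dualHG_mem] at he hf
  exact hf.2 e hef he.1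

/-- Key construction: for `v ∈ e ∈ E` (E Sperner) there is a minimal transversal
meeting `e` exactly in `v`. -/
lemma exists_minTransversal_inter_singleton {E : Finset (Finset V)} (hSp : SpernerHG E)
    {e : Finset V} (he : e ∈ E) {v : V} (hv : v ∈ e) :
    ∃ T, IsMinTransversal E T ∧ T ∩ e = {v} := by
  have hT0 : IsTransversal E (insert v eᶜ) := by
    intro f hf
    by_cases hfe : f = e
    · exact ⟨v, Finset.mem_inter.2 ⟨hfe ▸ hv, Finset.mem_insert_self _ _⟩⟩
    · have : ¬ f ⊆ e := fun hsub => hfe (hSp f hf e he hsub)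
      obtain ⟨w, hwf, hwe⟩ := Finset.not_subset.1 this
      exact ⟨w, Finset.mem_inter.2 ⟨hwf, Finset.mem_insert_of_mem (Finset.mem_compl.2 hwe)⟩⟩
  obtain ⟨T, hTsub, hTtr, hTmin⟩ := exists_minimal_subset (IsTransversal E) _ hT0
  refine ⟨T, ⟨hTtr, hTmin⟩, ?_⟩
  apply Finset.Subset.antisymm
  · intro x hx
    rw [Finset.mem_inter] at hx
    have := hTsub hx.1
    rcases Finset.mem_insert.1 this with h | h
    · simp [h]
    · exact absurd hx.2 (Finset.mem_compl.1 h)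
  · intro x hx
    rw [Finset.mem_singleton] at hx
    subst hx
    obtain ⟨y, hy⟩ := hTtr e he
    rw [Finset.mem_inter] at hy
    have hyi := hTsub hy.2
    rcases Finset.mem_insert.1 hyi with h | h
    · subst h; exact Finset.mem_inter.2 ⟨hy.2, hv⟩
    · exact absurd hy.1 (Finset.mem_compl.1 h)

/-- Each hyperedge of a Sperner hypergraph is a minimal transversal of the dual. -/
lemma edge_minTransversal_dual {E : Finset (Finset V)} (hSp : SpernerHG E)
    {e : Finset V} (he : e ∈ E) : IsMinTransversal (dualHG E) e := by
  have htr : IsTransversal (dualHG E) e := by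
    intro T hT
    rw [dualHG_mem] at hT
    obtain ⟨x, hx⟩ := hT.1 e he
    rw [Finset.mem_inter] at hx
    exact ⟨x, Finset.mem_inter.2 ⟨hx.2, hx.1⟩⟩
  refine ⟨htr, fun S hSe hS => ?_⟩
  refine Finset.Subset.antisymm hSe (fun v hv => ?_)
  obtain ⟨T, hTmin, hTe⟩ := exists_minTransversal_inter_singleton hSp he hv
  obtain ⟨x, hx⟩ := hS T (dualHG_mem.2 hTmin)
  rw [Finset.mem_inter] at hx
  have : x ∈ T ∩ e := Finset.mem_inter.2 ⟨hx.1, hSe hx.2⟩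
  rw [hTe, Finset.mem_singleton] at this
  exact this ▸ hx.2

/-- Double duality for Sperner hypergraphs. -/
lemma dual_dual {E : Finset (Finset V)} (hSp : SpernerHG E) : dualHG (dualHG E) = E := by
  ext S
  rw [dualHG_mem]
  constructor
  · rintro ⟨hStr, hSmin⟩
    have : ∃ e ∈ E, e ⊆ S := by
      by_contra h
      push_neg at h
      have hc : IsTransversal E Sᶜ := by
        intro f hf
        obtain ⟨w, hwf, hwS⟩ := Finset.not_subset.1 (h f hf)
        exact ⟨w, Finset.mem_inter.2 ⟨hwf, Finset.mem_compl.2 hwS⟩⟩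
      obtain ⟨T, hTsub, hTtr, hTmin⟩ := exists_minimal_subset (IsTransversal E) _ hc
      obtain ⟨x, hx⟩ := hStr T (dualHG_mem.2 ⟨hTtr, hTmin⟩)
      rw [Finset.mem_inter] at hx
      exact (Finset.mem_compl.1 (hTsub hx.1)) hx.2
    obtain ⟨e, he, heS⟩ := this
    have := hSmin e heS (edge_minTransversal_dual hSp he).1
    exact this ▸ he
  · intro hS
    exact edge_minTransversal_dual hSp hS

/-- The hypergraph of maximal cliques of a graph. -/
noncomputable def maxCliques (G : SimpleGraph V) : Finset (Finset V) :=
  Finset.univ.filter fun C => IsMaxClique G C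

lemma mem_maxCliques {G : SimpleGraph V} {C : Finset V} :
    C ∈ maxCliques G ↔ IsMaxClique G C := by simp [maxCliques]

lemma maxCliques_sperner (G : SimpleGraph V) : SpernerHG (maxCliques G) := by
  intro e he f hf hef
  rw [mem_maxCliques] at he hf
  exact (he.2 f hf.1 hef).symm

lemma minCliqueTransversal_iff {G : SimpleGraph V} {X : Finset V} :
    IsMinCliqueTransversal G X ↔ IsMinTransversal (maxCliques G) X := by
  have h : ∀ Y : Finset V, IsCliqueTransversal G Y ↔ IsTransversal (maxCliques G) Y := by
    intro Y
    constructor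
    · intro hY C hC; exact hY C (mem_maxCliques.1 hC)
    · intro hY C hC; exact hY C (mem_maxCliques.2 hC)
  unfold IsMinCliqueTransversal IsMinTransversal
  rw [h]
  refine and_congr Iff.rfl ⟨fun hm Y hYX hY => hm Y hYX ((h Y).2 hY),
    fun hm Y hYX hY => hm Y hYX ((h Y).1 hY)⟩

/-- Every hyperedge is a clique of the co-occurrence graph. -/
lemma edge_isClique {E : Finset (Finset V)} {e : Finset V} (he : e ∈ E) :
    (coocGraph E).IsClique (e : Set V) := by
  intro u hu v hv huv
  exact ⟨huv, e, he, hu, hv⟩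

/-- For a conformal Sperner hypergraph, the maximal cliques of its co-occurrence
graph are exactly its hyperedges. -/
lemma maxCliques_cooc {E : Finset (Finset V)} (hSp : SpernerHG E)
    (hCf : ConformalHG E) : maxCliques (coocGraph E) = E := by
  ext C
  rw [mem_maxCliques]
  constructor
  · exact hCf C
  · intro hC
    obtain ⟨D, hCD, hD⟩ := exists_maxClique_superset (coocGraph E) C (edge_isClique hC)
    have hDE : D ∈ E := hCf D hD
    have : C = D := hSp C hC D hDE hCD
    exact this ▸ hD

/-- The co-occurrence graph of the maximal-clique hypergraph of `G` is `G` itself. -/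
lemma cooc_maxCliques (G : SimpleGraph V) : coocGraph (maxCliques G) = G := by
  ext u v
  constructor
  · rintro ⟨huv, C, hC, hu, hv⟩
    exact (mem_maxCliques.1 hC).1 hu hv huv
  · intro h
    refine ⟨G.ne_of_adj h, ?_⟩
    have hcl : G.IsClique (({u, v} : Finset V) : Set V) := by
      rw [Finset.coe_insert, Finset.coe_singleton]
      exact SimpleGraph.isClique_pair.2 fun _ => h
    obtain ⟨D, hsub, hD⟩ := exists_maxClique_superset G _ hcl
    exact ⟨D, mem_maxCliques.2 hD, hsub (by simp), hsub (by simp)⟩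

/-- `H` is a dually conformal Sperner hypergraph iff there is a graph `G`
on `V(H)` whose minimal clique transversals are exactly the hyperedges of `H`. -/
theorem dually_conformal_sperner_iff [Nonempty V] (E : Finset (Finset V))
    (hcov : Covers E) :
    (SpernerHG E ∧ DuallyConformalHG E) ↔
      ∃ G : SimpleGraph V, ∀ X : Finset V, X ∈ E ↔ IsMinCliqueTransversal G X := by
  constructor
  · rintro ⟨hSp, hDC⟩
    refine ⟨coocGraph (dualHG E), fun X => ?_⟩
    have hM : maxCliques (coocGraph (dualHG E)) = dualHG E :=
      maxCliques_cooc (dualHG_sperner E) hDC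
    rw [minCliqueTransversal_iff, hM, ← dualHG_mem, dual_dual hSp]
  · rintro ⟨G, hG⟩
    have hSp : SpernerHG E := by
      intro e he f hf hef
      exact ((hG f).1 hf).2 e hef ((hG e).1 he).1
    have hE : E = dualHG (maxCliques G) := by
      ext X
      rw [hG, minCliqueTransversal_iff, dualHG_mem]
    refine ⟨hSp, ?_⟩
    unfold DuallyConformalHG ConformalHG
    have hd : dualHG E = maxCliques G := by
      rw [hE, dual_dual (maxCliques_sperner G)]
    rw [hd, cooc_maxCliques]
    exact fun C hC => mem_maxCliques.2 hC
end

section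
/- Let H be a 2-uniform hypergraph and let G = G(H^d) be the co-occurrence graph of its dual hypergraph. Then H is not dually conformal if and only if at least one of the following holds: (a) G contains a maximal clique C that is not a transversal of H, or (b) G contains a vertex v such that the closed neighborhood of v in H (that is, the set consisting of v together with all vertices that share a hyperedge of H with v) is a clique in G. -/
open Finset
open scoped Classical

variable {V : Type*} [Fintype V] [DecidableEq V]

/-- For a 2-uniform hypergraph `H`, `H` is not dually conformal iff
`G = G(H^d)` has a maximal clique which is not a transversal of `H`, or there is a
vertex `v` whose closed neighborhood in `H` is a clique in `G`. -/
theorem two_uniform_not_dually_conformal_iff [Nonempty V] (E : Finset (Finset V))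
    (hcov : Covers E) (h2 : ∀ e ∈ E, e.card = 2) :
    ¬ DuallyConformalHG E ↔
      ((∃ C : Finset V, IsMaxClique (coocGraph (dualHG E)) C ∧ ¬ IsTransversal E C) ∨
       (∃ v : V, (coocGraph (dualHG E)).IsClique
          ((insert v (Finset.univ.filter fun u => ∃ e ∈ E, v ∈ e ∧ u ∈ e) :
            Finset V) : Set V))) := by
  constructor
  · intro hND
    simp only [DuallyConformalHG, ConformalHG, not_forall] at hND
    obtain ⟨C, hCmax, hCnot⟩ := hND
    by_cases hT : IsTransversal E C
    · right
      have hnotmin : ¬ IsMinTransversal E C := fun h => hCnot (by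
        simp [dualHG, h])
      rw [IsMinTransversal, not_and] at hnotmin
      have h2' := hnotmin hT
      push_neg at h2'
      obtain ⟨T', hT'sub, hT'trans, hT'ne⟩ := h2'
      obtain ⟨v, hvC, hvT'⟩ : ∃ v ∈ C, v ∉ T' := by
        by_contra h; push_neg at h
        exact hT'ne (Finset.Subset.antisymm hT'sub h)
      refine ⟨v, ?_⟩
      have hsub : (insert v (Finset.univ.filter fun u => ∃ e ∈ E, v ∈ e ∧ u ∈ e)) ⊆ C := by
        intro u hu
        rcases Finset.mem_insert.mp hu with rfl | hu
        · exact hvC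
        · simp only [Finset.mem_filter] at hu
          obtain ⟨-, e, heE, hve, hue⟩ := hu
          by_cases huv : u = v
          · exact huv ▸ hvC
          · have he2 := h2 e heE
            have heq : e = {v, u} := by
              refine (Finset.eq_of_subset_of_card_le ?_ ?_).symm
              · intro x hx
                rcases Finset.mem_insert.mp hx with rfl | hx
                · exact hve
                · exact Finset.mem_singleton.mp hx ▸ hue
              · rw [he2, Finset.card_insert_of_notMem (by simp [Ne.symm huv]),
                  Finset.card_singleton]
            obtain ⟨w, hw⟩ := hT'trans e heE
            rw [Finset.mem_inter] at hw
            have hwvu : w = v ∨ w = u := by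
              have := hw.1
              rw [heq] at this
              simpa using this
            rcases hwvu with rfl | rfl
            · exact absurd hw.2 hvT'
            · exact hT'sub hw.2
      exact hCmax.1.subset (Finset.coe_subset.mpr hsub)
    · exact Or.inl ⟨C, hCmax, hT⟩
  · rintro (⟨C, hCmax, hCnt⟩ | ⟨v, hv⟩) <;> intro hDC
    · have hmem := hDC C hCmax
      simp only [dualHG, Finset.mem_filter] at hmem
      exact hCnt hmem.2.1
    · obtain ⟨M, hMmax, hSM⟩ : ∃ M : Finset V,
          IsMaxClique (coocGraph (dualHG E)) M ∧
            (insert v (Finset.univ.filter fun u => ∃ e ∈ E, v ∈ e ∧ u ∈ e)) ⊆ M := by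
        set S := insert v (Finset.univ.filter fun u => ∃ e ∈ E, v ∈ e ∧ u ∈ e) with hS
        obtain ⟨M, hMmem, hMmax⟩ := Finset.exists_max_image
          (Finset.univ.filter fun D : Finset V =>
            (coocGraph (dualHG E)).IsClique (D : Set V) ∧ S ⊆ D)
          Finset.card ⟨S, by simp [hv]⟩
        simp only [Finset.mem_filter, Finset.mem_univ, true_and] at hMmem
        refine ⟨M, ⟨hMmem.1, fun D hD hMD => ?_⟩, hMmem.2⟩
        have hDmem : D ∈ Finset.univ.filter fun D : Finset V =>
            (coocGraph (dualHG E)).IsClique (D : Set V) ∧ S ⊆ D := by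
          simp only [Finset.mem_filter, Finset.mem_univ, true_and]
          exact ⟨hD, hMmem.2.trans hMD⟩
        exact (Finset.eq_of_subset_of_card_le hMD (hMmax D hDmem)).symm
      have hMem := hDC M hMmax
      simp only [dualHG, Finset.mem_filter] at hMem
      obtain ⟨-, hMtrans, hMmin⟩ := hMem
      have hvM : v ∈ M := hSM (Finset.mem_insert_self _ _)
      have herase : IsTransversal E (M.erase v) := by
        intro e heE
        by_cases hve : v ∈ e
        · obtain ⟨u, hue, huv⟩ := Finset.exists_mem_ne
            (by rw [h2 e heE]; norm_num) v
          refine ⟨u, Finset.mem_inter.mpr ⟨hue, Finset.mem_erase.mpr ⟨huv, hSM ?_⟩⟩⟩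
          exact Finset.mem_insert_of_mem
            (Finset.mem_filter.mpr ⟨Finset.mem_univ _, e, heE, hve, hue⟩)
        · obtain ⟨w, hw⟩ := hMtrans e heE
          rw [Finset.mem_inter] at hw
          exact ⟨w, Finset.mem_inter.mpr
            ⟨hw.1, Finset.mem_erase.mpr ⟨fun h => hve (h ▸ hw.1), hw.2⟩⟩⟩
      have heq := hMmin (M.erase v) (Finset.erase_subset _ _) herase
      exact (Finset.notMem_erase v M) (by rw [heq]; exact hvM)
end

section
/- Let d ≥ 2, ℓ ≥ 1, and k > d be integers. Let W be a set of k vertices, and for each (d−1)-element subset A of W and each j ∈ {1, …, ℓ}, let x_{A,j} be a new vertex, all these new vertices being pairwise distinct and not in W. Let H be the d-uniform hypergraph whose hyperedges are all d-element subsets of W together with all sets of the form A ∪ {x_{A,j}} for a (d−1)-element subset A of W and j ∈ {1, …, ℓ}. Then the number of vertices of H is k + ℓ·C(k, d−1), the dimension of H is d, and the dimension of the dual hypergraph H^d is k + ℓ − (d−1). -/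
open Finset
open scoped Classical

variable {V : Type*} [Fintype V] [DecidableEq V]

/-- The vertex set of the Gurvich–Makino construction: a set `W` of `k` vertices
together with `ℓ` new vertices for each `(d-1)`-subset `A` of `W`. -/
abbrev GMvertex (d ℓ k : ℕ) : Type :=
  Fin k ⊕ ({A : Finset (Fin k) // A.card = d - 1} × Fin ℓ)

/-- The hyperedges of the Gurvich–Makino construction: all `d`-subsets of `W`,
together with the sets `A ∪ {x_{A,j}}` for each `(d-1)`-subset `A` of `W` and
each `j ∈ {1,…,ℓ}`. -/
def GMedges (d ℓ k : ℕ) : Finset (Finset (GMvertex d ℓ k)) :=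
  ((Finset.powersetCard d (Finset.univ : Finset (Fin k))).image
      fun s => s.image (Sum.inl : Fin k → GMvertex d ℓ k)) ∪
  (Finset.univ.image
      fun p : {A : Finset (Fin k) // A.card = d - 1} × Fin ℓ =>
        insert (Sum.inr p : GMvertex d ℓ k)
          ((p.1 : Finset (Fin k)).image (Sum.inl : Fin k → GMvertex d ℓ k)))


lemma mem_GMedges {d ℓ k : ℕ} {e : Finset (GMvertex d ℓ k)} :
    e ∈ GMedges d ℓ k ↔
      (∃ s : Finset (Fin k), s.card = d ∧ e = s.image Sum.inl) ∨
      (∃ p : {A : Finset (Fin k) // A.card = d - 1} × Fin ℓ,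
        e = insert (Sum.inr p) ((p.1 : Finset (Fin k)).image Sum.inl)) := by
  simp only [GMedges, Finset.mem_union, Finset.mem_image, Finset.mem_powersetCard_univ,
    Finset.mem_univ, true_and, eq_comm]

lemma GM_edge_card {d ℓ k : ℕ} (hd : 1 ≤ d) (e : Finset (GMvertex d ℓ k))
    (he : e ∈ GMedges d ℓ k) : e.card = d := by
  rcases mem_GMedges.mp he with ⟨s, hs, rfl⟩ | ⟨p, rfl⟩
  · rw [Finset.card_image_of_injective s Sum.inl_injective, hs]
  · rw [Finset.card_insert_of_notMem (by simp),
      Finset.card_image_of_injective _ Sum.inl_injective, (p.1).2]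
    omega

lemma GM_exists (d ℓ k : ℕ) (hd : 2 ≤ d) (hl : 1 ≤ ℓ) (hk : d < k) :
    ∃ T : Finset (GMvertex d ℓ k), IsMinTransversal (GMedges d ℓ k) T ∧
      T.card = k + ℓ - (d - 1) := by
  obtain ⟨A₀, -, hA₀⟩ := Finset.exists_subset_card_eq
    (show d - 1 ≤ (Finset.univ : Finset (Fin k)).card by rw [Finset.card_univ, Fintype.card_fin]; omega)
  set T₀ : Finset (GMvertex d ℓ k) :=
    A₀ᶜ.image Sum.inl ∪ Finset.univ.image
      (fun j : Fin ℓ => (Sum.inr (⟨A₀, hA₀⟩, j) : GMvertex d ℓ k)) with hT₀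
  have hmemT₀ : ∀ v : GMvertex d ℓ k, v ∈ T₀ ↔
      (∃ w : Fin k, w ∉ A₀ ∧ v = Sum.inl w) ∨
      (∃ j : Fin ℓ, v = Sum.inr (⟨A₀, hA₀⟩, j)) := by
    intro v
    simp [hT₀, eq_comm]
  have htrans : IsTransversal (GMedges d ℓ k) T₀ := by
    intro e he
    rcases mem_GMedges.mp he with ⟨s, hs, rfl⟩ | ⟨p, rfl⟩
    · -- d-subset edge
      have : ∃ w ∈ s, w ∉ A₀ := by
        by_contra h
        push_neg at h
        have := Finset.card_le_card h
        omega
      obtain ⟨w, hws, hwA⟩ := this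
      exact ⟨Sum.inl w, Finset.mem_inter.mpr ⟨Finset.mem_image_of_mem _ hws,
        (hmemT₀ _).mpr (Or.inl ⟨w, hwA, rfl⟩)⟩⟩
    · by_cases hpA : (p.1 : Finset (Fin k)) = A₀
      · refine ⟨Sum.inr p, Finset.mem_inter.mpr ⟨Finset.mem_insert_self _ _,
          (hmemT₀ _).mpr (Or.inr ⟨p.2, ?_⟩)⟩⟩
        have : p.1 = ⟨A₀, hA₀⟩ := Subtype.ext hpA
        rw [← this]
      · have : ∃ w ∈ (p.1 : Finset (Fin k)), w ∉ A₀ := by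
          by_contra h
          push_neg at h
          exact hpA (Finset.eq_of_subset_of_card_le h (by rw [hA₀, (p.1).2]))
        obtain ⟨w, hws, hwA⟩ := this
        exact ⟨Sum.inl w, Finset.mem_inter.mpr
          ⟨Finset.mem_insert_of_mem (Finset.mem_image_of_mem _ hws),
            (hmemT₀ _).mpr (Or.inl ⟨w, hwA, rfl⟩)⟩⟩
  refine ⟨T₀, ⟨htrans, ?_⟩, ?_⟩
  · -- minimality
    intro T' hT'sub hT'
    apply Finset.Subset.antisymm hT'sub
    intro v hv
    rcases (hmemT₀ v).mp hv with ⟨w, hwA, rfl⟩ | ⟨j, rfl⟩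
    · -- v = inl w, w ∉ A₀
      have hins : (insert w A₀).card = d := by
        rw [Finset.card_insert_of_notMem hwA, hA₀]; omega
      have he : ((insert w A₀).image Sum.inl : Finset (GMvertex d ℓ k)) ∈ GMedges d ℓ k :=
        mem_GMedges.mpr (Or.inl ⟨_, hins, rfl⟩)
      obtain ⟨u, hu⟩ := hT' _ he
      rw [Finset.mem_inter] at hu
      obtain ⟨x, hxs, rfl⟩ := Finset.mem_image.mp hu.1
      have hxT₀ := hT'sub hu.2
      rcases (hmemT₀ _).mp hxT₀ with ⟨y, hyA, hy⟩ | ⟨j, hj⟩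
      · obtain rfl : x = y := Sum.inl.inj hy
        rcases Finset.mem_insert.mp hxs with rfl | hxA
        · exact hu.2
        · exact absurd hxA hyA
      · simp at hj
    · have he : (insert (Sum.inr (⟨A₀, hA₀⟩, j)) (A₀.image Sum.inl) : Finset (GMvertex d ℓ k))
          ∈ GMedges d ℓ k := mem_GMedges.mpr (Or.inr ⟨(⟨A₀, hA₀⟩, j), rfl⟩)
      obtain ⟨u, hu⟩ := hT' _ he
      rw [Finset.mem_inter] at hu
      rcases Finset.mem_insert.mp hu.1 with rfl | humem
      · exact hu.2
      · obtain ⟨x, hxA, rfl⟩ := Finset.mem_image.mp humem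
        have := hT'sub hu.2
        rcases (hmemT₀ _).mp this with ⟨y, hyA, hy⟩ | ⟨j', hj'⟩
        · obtain rfl : x = y := Sum.inl.inj hy
          exact absurd hxA hyA
        · simp at hj'
  · -- cardinality
    rw [Finset.card_union_of_disjoint (by simp [Finset.disjoint_left]),
      Finset.card_image_of_injective _ Sum.inl_injective,
      Finset.card_image_of_injective _ (fun a b hab => by
        simpa using (Sum.inr.inj hab)),
      Finset.card_compl, hA₀, Finset.card_univ, Fintype.card_fin, Fintype.card_fin]
    omega

lemma GM_card_le (d ℓ k : ℕ) (hd : 2 ≤ d) (hl : 1 ≤ ℓ) (hk : d < k)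
    (T : Finset (GMvertex d ℓ k)) (hT : IsMinTransversal (GMedges d ℓ k) T) :
    T.card ≤ k + ℓ - (d - 1) := by
  set S : Finset (Fin k) := Finset.univ.filter (fun w => Sum.inl w ∈ T) with hS
  have hmemS : ∀ w : Fin k, w ∈ S ↔ Sum.inl w ∈ T := by intro w; simp [hS]
  have hcards : S.card + Sᶜ.card = k := by
    rw [Finset.card_add_card_compl, Fintype.card_fin]
  -- all d-subsets meet S
  have hSc : Sᶜ.card ≤ d - 1 := by
    by_contra h
    obtain ⟨t, hts, ht⟩ := Finset.exists_subset_card_eq (show d ≤ Sᶜ.card by omega)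
    have he : (t.image Sum.inl : Finset (GMvertex d ℓ k)) ∈ GMedges d ℓ k :=
      mem_GMedges.mpr (Or.inl ⟨t, ht, rfl⟩)
    obtain ⟨u, hu⟩ := hT.1 _ he
    rw [Finset.mem_inter] at hu
    obtain ⟨x, hxt, rfl⟩ := Finset.mem_image.mp hu.1
    exact Finset.mem_compl.mp (hts hxt) ((hmemS x).mpr hu.2)
  -- inr vertices of T have body disjoint from S
  have hB : ∀ p : {A : Finset (Fin k) // A.card = d - 1} × Fin ℓ, Sum.inr p ∈ T →
      ∀ w ∈ (p.1 : Finset (Fin k)), w ∉ S := by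
    intro p hp w hw hwS
    have htrans' : IsTransversal (GMedges d ℓ k) (T.erase (Sum.inr p)) := by
      intro e he
      rcases mem_GMedges.mp he with ⟨s, hs, rfl⟩ | ⟨q, rfl⟩
      · obtain ⟨u, hu⟩ := hT.1 _ (mem_GMedges.mpr (Or.inl ⟨s, hs, rfl⟩))
        rw [Finset.mem_inter] at hu
        obtain ⟨x, hxs, rfl⟩ := Finset.mem_image.mp hu.1
        exact ⟨Sum.inl x, Finset.mem_inter.mpr ⟨hu.1,
          Finset.mem_erase.mpr ⟨by simp, hu.2⟩⟩⟩
      · by_cases hqp : q = p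
        · subst hqp
          refine ⟨Sum.inl w, Finset.mem_inter.mpr
            ⟨Finset.mem_insert_of_mem (Finset.mem_image_of_mem _ hw),
              Finset.mem_erase.mpr ⟨by simp, (hmemS w).mp hwS⟩⟩⟩
        · obtain ⟨u, hu⟩ := hT.1 _ (mem_GMedges.mpr (Or.inr ⟨q, rfl⟩))
          rw [Finset.mem_inter] at hu
          refine ⟨u, Finset.mem_inter.mpr ⟨hu.1, Finset.mem_erase.mpr ⟨?_, hu.2⟩⟩⟩
          rintro rfl
          rcases Finset.mem_insert.mp hu.1 with h | h
          · exact hqp (Sum.inr.inj h).symm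
          · obtain ⟨x, -, hx⟩ := Finset.mem_image.mp h
            exact Sum.inl_ne_inr hx
    have heq := hT.2 _ (Finset.erase_subset _ _) htrans'
    have h2 := Finset.notMem_erase (Sum.inr p) T
    rw [heq] at h2
    exact h2 hp
  by_cases hx : ∃ p : {A : Finset (Fin k) // A.card = d - 1} × Fin ℓ, Sum.inr p ∈ T
  · obtain ⟨p, hp⟩ := hx
    have hsub : (p.1 : Finset (Fin k)) ⊆ Sᶜ :=
      fun w hw => Finset.mem_compl.mpr (hB p hp w hw)
    have hcd : Sᶜ.card = d - 1 :=
      le_antisymm hSc ((p.1).2 ▸ Finset.card_le_card hsub)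
    have hpf : ∀ q : {A : Finset (Fin k) // A.card = d - 1} × Fin ℓ, Sum.inr q ∈ T →
        (q.1 : Finset (Fin k)) = Sᶜ := by
      intro q hq
      exact Finset.eq_of_subset_of_card_le
        (fun w hw => Finset.mem_compl.mpr (hB q hq w hw)) (by rw [hcd, (q.1).2])
    have hTsub : T ⊆ S.image Sum.inl ∪
        Finset.univ.image (fun j : Fin ℓ => (Sum.inr (⟨Sᶜ, hcd⟩, j) : GMvertex d ℓ k)) := by
      intro v hv
      rcases v with w | q
      · exact Finset.mem_union_left _ (Finset.mem_image_of_mem _ ((hmemS w).mpr hv))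
      · refine Finset.mem_union_right _ (Finset.mem_image.mpr ⟨q.2, Finset.mem_univ _, ?_⟩)
        have h1 : q.1 = ⟨Sᶜ, hcd⟩ := Subtype.ext (hpf q hv)
        rw [← h1]
    calc T.card ≤ _ := Finset.card_le_card hTsub
      _ ≤ (S.image Sum.inl).card + (Finset.univ.image
            (fun j : Fin ℓ => (Sum.inr (⟨Sᶜ, hcd⟩, j) : GMvertex d ℓ k))).card :=
          Finset.card_union_le _ _
      _ ≤ S.card + ℓ := by
          rw [Finset.card_image_of_injective _ Sum.inl_injective]
          exact Nat.add_le_add_left (le_trans (Finset.card_image_le)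
            (by rw [Finset.card_univ, Fintype.card_fin])) _
      _ ≤ k + ℓ - (d - 1) := by omega
  · push_neg at hx
    have hTS : T ⊆ S.image Sum.inl := by
      intro v hv
      rcases v with w | q
      · exact Finset.mem_image_of_mem _ ((hmemS w).mpr hv)
      · exact absurd hv (hx q)
    have hmin : d - 2 ≤ Sᶜ.card := by
      by_contra h
      push_neg at h
      obtain ⟨w, hw⟩ : S.Nonempty := Finset.card_pos.mp (by omega)
      have hkey : ∀ s : Finset (Fin k), d - 1 ≤ s.card → ∃ x ∈ s, x ∈ S ∧ x ≠ w := by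
        intro s hs
        by_contra hc
        push_neg at hc
        have hsub : s ⊆ insert w Sᶜ := by
          intro x hxs
          by_cases hxw : x = w
          · exact hxw ▸ Finset.mem_insert_self _ _
          · exact Finset.mem_insert_of_mem (Finset.mem_compl.mpr
              (fun hxS => hxw (hc x hxs hxS)))
        have := Finset.card_le_card hsub
        have := Finset.card_insert_le w Sᶜ
        omega
      have htrans' : IsTransversal (GMedges d ℓ k) (T.erase (Sum.inl w)) := by
        intro e he
        rcases mem_GMedges.mp he with ⟨s, hs, rfl⟩ | ⟨q, rfl⟩
        · obtain ⟨x, hxs, hxS, hxw⟩ := hkey s (by omega)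
          exact ⟨Sum.inl x, Finset.mem_inter.mpr ⟨Finset.mem_image_of_mem _ hxs,
            Finset.mem_erase.mpr ⟨by simpa using hxw, (hmemS x).mp hxS⟩⟩⟩
        · obtain ⟨x, hxs, hxS, hxw⟩ := hkey (q.1 : Finset (Fin k)) (by rw [(q.1).2])
          exact ⟨Sum.inl x, Finset.mem_inter.mpr
            ⟨Finset.mem_insert_of_mem (Finset.mem_image_of_mem _ hxs),
              Finset.mem_erase.mpr ⟨by simpa using hxw, (hmemS x).mp hxS⟩⟩⟩
      have heq := hT.2 _ (Finset.erase_subset _ _) htrans'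
      have h2 := Finset.notMem_erase (Sum.inl w) T
      rw [heq] at h2
      exact h2 ((hmemS w).mp hw)
    have h1 : T.card ≤ S.card := by
      have := Finset.card_le_card hTS
      rwa [Finset.card_image_of_injective _ Sum.inl_injective] at this
    omega

set_option maxHeartbeats 1000000 in
/-- For `d ≥ 2`, `ℓ ≥ 1`, `k > d`, the Gurvich–Makino hypergraph has
`k + ℓ·C(k, d-1)` vertices, dimension `d`, and its dual has dimension
`k + ℓ - (d-1)`. -/
theorem gurvich_makino (d ℓ k : ℕ) (hd : 2 ≤ d) (hl : 1 ≤ ℓ) (hk : d < k) :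
    Fintype.card (GMvertex d ℓ k) = k + ℓ * Nat.choose k (d - 1) ∧
    (GMedges d ℓ k).sup Finset.card = d ∧
    (dualHG (GMedges d ℓ k)).sup Finset.card = k + ℓ - (d - 1) := by
  refine ⟨?_, ?_, ?_⟩
  · rw [Fintype.card_sum, Fintype.card_prod, Fintype.card_fin, Fintype.card_fin,
      Fintype.card_subtype]
    have h1 : (Finset.univ.filter fun A : Finset (Fin k) => A.card = d - 1)
        = Finset.powersetCard (d - 1) Finset.univ := by
      ext s; simp [Finset.mem_powersetCard_univ]
    rw [h1, Finset.card_powersetCard, Finset.card_univ, Fintype.card_fin, Nat.mul_comm]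
  · refine le_antisymm (Finset.sup_le fun e he =>
      le_of_eq (GM_edge_card (by omega) e he)) ?_
    obtain ⟨s₀, -, hs₀⟩ := Finset.exists_subset_card_eq
      (show d ≤ (Finset.univ : Finset (Fin k)).card by
        rw [Finset.card_univ, Fintype.card_fin]; omega)
    have he : (s₀.image Sum.inl : Finset (GMvertex d ℓ k)) ∈ GMedges d ℓ k :=
      mem_GMedges.mpr (Or.inl ⟨s₀, hs₀, rfl⟩)
    have h2 := Finset.le_sup (f := Finset.card) he
    rw [GM_edge_card (show 1 ≤ d by omega) _ he] at h2
    exact h2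
  · refine le_antisymm (Finset.sup_le fun T hT => GM_card_le d ℓ k hd hl hk T ?_) ?_
    · simpa [dualHG] using hT
    · obtain ⟨T, hTmin, hTcard⟩ := GM_exists d ℓ k hd hl hk
      have hmem : T ∈ dualHG (GMedges d ℓ k) := by simp [dualHG, hTmin]
      exact hTcard ▸ Finset.le_sup hmem
end
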